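/- The function Π(x) = φ(x)·I₁(2φ(x)) with φ(x)² = −2k(x−μ), on the domain where φ(x)² > 0, also solves (x−μ)Π''(x) + 2k·Π(x) = 0. -/

import Mathlib

open Real Set

/-- The boundary function `Π(x) = φ(x) I₁(2φ(x))` with `φ(x) = √(−2k(x−μ))`
solves `(x−μ) Π'' + 2k Π = 0` on the domain `{x : −2k(x−μ) > 0}`, where `I₁`
is a solution of the modified Bessel equation of order 1 (first kind). -/
theorem boundary_function_I1_solves_ODE
    (k μ : ℝ) (hk : k = 1/2 ∨ k = -1/2)
    (I₁ : ℝ → ℝ)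
    (hsmooth : ContDiffOn ℝ 2 I₁ (Set.Ioi 0))
    (hBessel : ∀ t : ℝ, 0 < t →
      t ^ 2 * deriv (deriv I₁) t + t * deriv I₁ t - (t ^ 2 + 1) * I₁ t = 0) :
    ∀ x : ℝ, 0 < -2 * k * (x - μ) →
      (x - μ) *
        deriv (deriv (fun x => Real.sqrt (-2 * k * (x - μ)) *
          I₁ (2 * Real.sqrt (-2 * k * (x - μ))))) x +
      2 * k * (Real.sqrt (-2 * k * (x - μ)) *
        I₁ (2 * Real.sqrt (-2 * k * (x - μ)))) = 0 := by
  intro x hx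
  set c : ℝ := -2 * k with hc
  have hc1 : c * c = 1 := by rcases hk with h | h <;> rw [hc, h] <;> norm_num
  have hU : IsOpen {y : ℝ | 0 < c * (y - μ)} :=
    isOpen_lt continuous_const (by continuity)
  have hxU : x ∈ {y : ℝ | 0 < c * (y - μ)} := hx
  -- differentiability of I₁ and its derivative on (0,∞)
  have hI1 : ∀ t : ℝ, 0 < t → HasDerivAt I₁ (deriv I₁ t) t := fun t ht =>
    ((hsmooth.differentiableOn (by norm_num)).differentiableAt
      (isOpen_Ioi.mem_nhds ht)).hasDerivAt
  have hcd : ContDiffOn ℝ 1 (deriv I₁) (Ioi 0) :=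
    hsmooth.deriv_of_isOpen isOpen_Ioi (by norm_num)
  have hI2 : ∀ t : ℝ, 0 < t → HasDerivAt (deriv I₁) (deriv (deriv I₁) t) t := fun t ht =>
    ((hcd.differentiableOn (by norm_num)).differentiableAt
      (isOpen_Ioi.mem_nhds ht)).hasDerivAt
  -- derivative of φ
  have hφd : ∀ y : ℝ, 0 < c * (y - μ) →
      HasDerivAt (fun z => Real.sqrt (c * (z - μ)))
        (c / (2 * Real.sqrt (c * (y - μ)))) y := by
    intro y hy
    have hs : HasDerivAt (fun z : ℝ => c * (z - μ)) c y := by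
      simpa using ((hasDerivAt_id y).sub_const μ).const_mul c
    have h := (Real.hasDerivAt_sqrt hy.ne').comp y hs
    refine h.congr_deriv ?_
    ring
  have h2φ : ∀ y : ℝ, 0 < c * (y - μ) →
      HasDerivAt (fun z => 2 * Real.sqrt (c * (z - μ)))
        (c / Real.sqrt (c * (y - μ))) y := by
    intro y hy
    have hne : Real.sqrt (c * (y - μ)) ≠ 0 := (Real.sqrt_pos.mpr hy).ne'
    have h := (hφd y hy).const_mul 2
    refine h.congr_deriv ?_
    field_simp
  have hIc : ∀ y : ℝ, 0 < c * (y - μ) →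
      HasDerivAt (fun z => I₁ (2 * Real.sqrt (c * (z - μ))))
        (deriv I₁ (2 * Real.sqrt (c * (y - μ))) * (c / Real.sqrt (c * (y - μ)))) y := by
    intro y hy
    have hpos : 0 < 2 * Real.sqrt (c * (y - μ)) := by
      have := Real.sqrt_pos.mpr hy; linarith
    exact (hI1 _ hpos).comp y (h2φ y hy)
  -- first derivative of Π
  set g : ℝ → ℝ := fun y =>
    c / (2 * Real.sqrt (c * (y - μ))) * I₁ (2 * Real.sqrt (c * (y - μ))) +
    c * deriv I₁ (2 * Real.sqrt (c * (y - μ))) with hg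
  have hPi : ∀ y : ℝ, 0 < c * (y - μ) →
      HasDerivAt (fun z => Real.sqrt (c * (z - μ)) * I₁ (2 * Real.sqrt (c * (z - μ))))
        (g y) y := by
    intro y hy
    have hne : Real.sqrt (c * (y - μ)) ≠ 0 := (Real.sqrt_pos.mpr hy).ne'
    have h := (hφd y hy).mul (hIc y hy)
    refine h.congr_deriv ?_
    rw [hg]
    field_simp
  have hev : deriv (fun z => Real.sqrt (c * (z - μ)) * I₁ (2 * Real.sqrt (c * (z - μ))))
      =ᶠ[nhds x] g := by
    filter_upwards [hU.mem_nhds hxU] with y hy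
    exact (hPi y hy).deriv
  have hD2 : deriv (deriv (fun z => Real.sqrt (c * (z - μ)) *
      I₁ (2 * Real.sqrt (c * (z - μ))))) x = deriv g x := hev.deriv_eq
  -- derivative of g at x
  have hφx : 0 < Real.sqrt (c * (x - μ)) := Real.sqrt_pos.mpr hx
  have hne : Real.sqrt (c * (x - μ)) ≠ 0 := hφx.ne'
  have h2pos : 0 < 2 * Real.sqrt (c * (x - μ)) := by linarith
  have hq : HasDerivAt (fun y => c / (2 * Real.sqrt (c * (y - μ))))
      (c * (-(c / Real.sqrt (c * (x - μ))) / (2 * Real.sqrt (c * (x - μ))) ^ 2)) x := by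
    have h := ((h2φ x hx).inv h2pos.ne').const_mul c
    simpa [div_eq_mul_inv] using h
  have hgd : HasDerivAt g
      (c * (-(c / Real.sqrt (c * (x - μ))) / (2 * Real.sqrt (c * (x - μ))) ^ 2) *
        I₁ (2 * Real.sqrt (c * (x - μ))) +
       c / (2 * Real.sqrt (c * (x - μ))) *
        (deriv I₁ (2 * Real.sqrt (c * (x - μ))) * (c / Real.sqrt (c * (x - μ)))) +
       c * (deriv (deriv I₁) (2 * Real.sqrt (c * (x - μ))) *
        (c / Real.sqrt (c * (x - μ))))) x := by
    exact (hq.mul (hIc x hx)).add (((hI2 _ h2pos).comp (h₂ := deriv I₁) x (h2φ x hx)).const_mul c)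
  rw [hD2, hgd.deriv]
  -- final algebra
  set φ := Real.sqrt (c * (x - μ)) with hφdef
  have hφsq : φ * φ = c * (x - μ) := Real.mul_self_sqrt hx.le
  have hxm : x - μ = c * (φ * φ) := by
    rw [hφsq, ← mul_assoc, hc1, one_mul]
  have h2k : 2 * k = -c := by rw [hc]; ring
  have hB := hBessel (2 * φ) (by linarith)
  rw [hxm, h2k]
  set I := I₁ (2 * φ)
  set dI := deriv I₁ (2 * φ)
  set ddI := deriv (deriv I₁) (2 * φ)
  field_simp
  linear_combination (c^3) * hB + (4*c*φ^2*I) * hc1
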